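/- For any c ∈ ℝ and ℓ ∈ ℕ_0, the sum a_k(2ℓ, c) := Σ_{p=0}^{2ℓ} C(p+c, p) C(p, k) satisfies the closed form a_k(2ℓ, c) = C(2ℓ+c+1, 2ℓ-k) C(c+k, k) for every k ∈ ℕ_0. -/

import Mathlib

open Filter Real MeasureTheory

/-- Generalized binomial coefficient `C(x, m) = x(x-1)⋯(x-m+1)/m!` for `m ∈ ℕ₀`, `0` for `m < 0`. -/
noncomputable def gchoose (x : ℝ) (m : ℤ) : ℝ :=
  if 0 ≤ m then (∏ i ∈ Finset.range m.toNat, (x - (i : ℝ))) / (Nat.factorial m.toNat : ℝ) else 0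

/-- Generalized Laguerre polynomial `L_j^α(x) = Σ_{ℓ=0}^j ((-1)^ℓ/ℓ!) C(j+α, j-ℓ) x^ℓ`. -/
noncomputable def lagL (j : ℕ) (α : ℝ) : ℝ → ℝ :=
  fun x => ∑ l ∈ Finset.range (j + 1),
    ((-1 : ℝ) ^ l / (Nat.factorial l : ℝ)) * gchoose ((j : ℝ) + α) ((j : ℤ) - l) * x ^ l

lemma gchoose_nat (x : ℝ) (n : ℕ) :
    gchoose x (n : ℤ) = (∏ i ∈ Finset.range n, (x - (i : ℝ))) / (Nat.factorial n : ℝ) := by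
  simp [gchoose]

lemma gchoose_neg (x : ℝ) {m : ℤ} (h : m < 0) : gchoose x m = 0 := by
  simp [gchoose, not_le.mpr h]

lemma pascal_nat (x : ℝ) (n : ℕ) :
    gchoose (x + 1) ((n : ℤ) + 1) = gchoose x (n : ℤ) + gchoose x ((n : ℤ) + 1) := by
  have h1 : ((n : ℤ) + 1) = ((n + 1 : ℕ) : ℤ) := by push_cast; ring
  rw [h1, gchoose_nat, gchoose_nat, gchoose_nat]
  have hp : ∏ i ∈ Finset.range (n + 1), (x + 1 - (i : ℝ))
      = (∏ i ∈ Finset.range n, (x - (i : ℝ))) * (x + 1) := by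
    rw [Finset.prod_range_succ']
    push_cast; ring_nf
  have hp2 : ∏ i ∈ Finset.range (n + 1), (x - (i : ℝ))
      = (∏ i ∈ Finset.range n, (x - (i : ℝ))) * (x - n) := Finset.prod_range_succ _ _
  rw [hp, hp2, Nat.factorial_succ]
  have h2 : (Nat.factorial n : ℝ) ≠ 0 := Nat.cast_ne_zero.mpr (Nat.factorial_ne_zero n)
  have h3 : ((n : ℝ) + 1) ≠ 0 := by positivity
  field_simp
  push_cast
  ring

lemma pascal_int (x : ℝ) (m : ℤ) :
    gchoose (x + 1) m = gchoose x m + gchoose x (m - 1) := by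
  rcases lt_or_ge m 0 with h | h
  · rw [gchoose_neg _ h, gchoose_neg _ h, gchoose_neg _ (by omega)]; ring
  · obtain ⟨n, rfl⟩ := Int.eq_ofNat_of_zero_le h
    cases n with
    | zero => simp [gchoose]
    | succ n =>
      have : ((n + 1 : ℕ) : ℤ) = (n : ℤ) + 1 := by push_cast; ring
      rw [this, pascal_nat]
      simp
      ring

lemma trinom (c : ℝ) (p k : ℕ) :
    gchoose ((p : ℝ) + c) (p : ℤ) * (Nat.choose p k : ℝ)
      = gchoose (c + (k : ℝ)) (k : ℤ) * gchoose ((p : ℝ) + c) ((p : ℤ) - (k : ℤ)) := by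
  rcases lt_or_ge p k with h | h
  · rw [Nat.choose_eq_zero_of_lt h, gchoose_neg _ (by omega : (p : ℤ) - (k : ℤ) < 0)]
    simp
  · obtain ⟨q, rfl⟩ : ∃ q, p = k + q := ⟨p - k, by omega⟩
    have hq : ((k + q : ℕ) : ℤ) - (k : ℤ) = (q : ℤ) := by push_cast; ring
    rw [hq, gchoose_nat, gchoose_nat, gchoose_nat]
    have hsplit : ∏ i ∈ Finset.range (k + q), (((k + q : ℕ) : ℝ) + c - (i : ℝ))
        = (∏ i ∈ Finset.range q, (((k + q : ℕ) : ℝ) + c - (i : ℝ)))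
          * ∏ i ∈ Finset.range k, (c + (k : ℝ) - (i : ℝ)) := by
      rw [add_comm k q, Finset.prod_range_add]
      congr 1
      apply Finset.prod_congr rfl
      intro i _
      push_cast; ring
    rw [hsplit]
    have hch : (Nat.choose (k + q) k : ℝ)
        = (Nat.factorial (k + q) : ℝ) / ((Nat.factorial k : ℝ) * (Nat.factorial q : ℝ)) := by
      rw [Nat.cast_choose ℝ (Nat.le_add_right k q), Nat.add_sub_cancel_left]
    rw [hch]
    have h1 : (Nat.factorial (k + q) : ℝ) ≠ 0 := Nat.cast_ne_zero.mpr (Nat.factorial_ne_zero _)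
    have h2 : (Nat.factorial k : ℝ) ≠ 0 := Nat.cast_ne_zero.mpr (Nat.factorial_ne_zero _)
    have h3 : (Nat.factorial q : ℝ) ≠ 0 := Nat.cast_ne_zero.mpr (Nat.factorial_ne_zero _)
    field_simp

lemma key_sum (c : ℝ) (k n : ℕ) :
    ∑ p ∈ Finset.range (n + 1), gchoose ((p : ℝ) + c) (p : ℤ) * (Nat.choose p k : ℝ)
      = gchoose ((n : ℝ) + c + 1) ((n : ℤ) - (k : ℤ)) * gchoose (c + (k : ℝ)) (k : ℤ) := by
  induction n with
  | zero =>
    rw [show (0:ℕ)+1 = 1 from rfl, Finset.sum_range_one]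
    cases k with
    | zero => simp [gchoose]
    | succ k =>
      rw [Nat.choose_eq_zero_of_lt (Nat.succ_pos k),
        gchoose_neg _ (show ((0 : ℕ) : ℤ) - ((k + 1 : ℕ) : ℤ) < 0 by push_cast; omega)]
      simp
  | succ n ih =>
    rw [Finset.sum_range_succ, ih, trinom]
    have hx : ((n + 1 : ℕ) : ℝ) + c + 1 = ((n : ℝ) + c + 1) + 1 := by push_cast; ring
    have hm : ((n + 1 : ℕ) : ℤ) - (k : ℤ) = ((n : ℤ) - (k : ℤ)) + 1 := by push_cast; ring
    rw [hx, hm, pascal_int ((n : ℝ) + c + 1) (((n : ℤ) - (k : ℤ)) + 1)]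
    have hm2 : ((n : ℤ) - (k : ℤ)) + 1 - 1 = (n : ℤ) - (k : ℤ) := by ring
    rw [hm2]
    have hx2 : ((n + 1 : ℕ) : ℝ) + c = (n : ℝ) + c + 1 := by push_cast; ring
    rw [hx2]
    ring

theorem a_k_closed_form (c : ℝ) (l k : ℕ) :
    ∑ p ∈ Finset.range (2 * l + 1), gchoose ((p : ℝ) + c) (p : ℤ) * (Nat.choose p k : ℝ)
      = gchoose (2 * (l : ℝ) + c + 1) (2 * (l : ℤ) - (k : ℤ)) * gchoose (c + (k : ℝ)) (k : ℤ) := by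
  have h := key_sum c k (2 * l)
  have h1 : ((2 * l : ℕ) : ℝ) + c + 1 = 2 * (l : ℝ) + c + 1 := by push_cast; ring
  have h2 : ((2 * l : ℕ) : ℤ) - (k : ℤ) = 2 * (l : ℤ) - (k : ℤ) := by push_cast; ring
  rw [h1, h2] at h
  exact h
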